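/- Let Γ be the incidence graph of a symmetric 2-(v,k,λ) design of order q = k−λ ≥ 2, with n = 2v vertices. Then the metric dimension of Γ is at most 2·⌈v·log v/(k−λ)⌉, and consequently μ(Γ) ≤ C·√n·log n for an absolute constant C. -/

import Mathlib

open Finset

/-- The incidence graph of a family of blocks `B` over a point set `X`. -/
def incidenceGraph {X : Type*} [DecidableEq X] (B : Finset (Finset X)) :
    SimpleGraph (X ⊕ {C // C ∈ B}) where
  Adj u w :=
    match u, w with
    | Sum.inl x, Sum.inr C => x ∈ C.1
    | Sum.inr C, Sum.inl x => x ∈ C.1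
    | _, _ => False
  symm := ⟨by rintro (x | C) (y | D) h <;> simp_all⟩
  loopless := ⟨by rintro (x | C) h <;> simp_all⟩

/-- A set of vertices `S` resolves a graph `G` if each vertex is determined by its
vector of distances to the elements of `S`. -/
def IsResolvingSet {V : Type*} (G : SimpleGraph V) (S : Finset V) : Prop :=
  ∀ u w : V, (∀ x ∈ S, G.dist u x = G.dist w x) → u = w

/-- The metric dimension of a graph: the least size of a resolving set. -/
noncomputable def metricDim {V : Type*} (G : SimpleGraph V) : ℕ :=
  sInf {s : ℕ | ∃ S : Finset V, S.card = s ∧ IsResolvingSet G S}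

lemma metricDim_le_card {V : Type*} (G : SimpleGraph V) (S : Finset V)
    (h : IsResolvingSet G S) : metricDim G ≤ S.card :=
  Nat.sInf_le ⟨S, rfl, h⟩

lemma keyIneqR (v q m : ℕ) (hq : 1 ≤ q) (hv : 2*q + 1 ≤ v)
    (hm : (v:ℝ) * Real.log v / q ≤ m) :
    ((v:ℝ)*v - v) * ((v:ℝ) - 2*q)^m < (v:ℝ)^m := by
  set V := (v:ℝ) with hV
  set Q := (q:ℝ) with hQ
  have hQ1 : (1:ℝ) ≤ Q := by rw [hQ]; exact_mod_cast hq
  have hV1 : 2*Q + 1 ≤ V := by rw [hQ, hV]; exact_mod_cast hv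
  have hV0 : 0 < V := by linarith
  have hbase : 0 ≤ V - 2*Q := by linarith
  have hstep : V - 2*Q ≤ V * Real.exp (-(2*Q/V)) := by
    have h1 := Real.add_one_le_exp (-(2*Q/V))
    have h2 : V * (1 - 2*Q/V) = V - 2*Q := by field_simp
    nlinarith [Real.exp_pos (-(2*Q/V))]
  have hpow : (V - 2*Q)^m ≤ V^m * Real.exp (-(2*Q/V)) ^ m := by
    calc (V - 2*Q)^m ≤ (V * Real.exp (-(2*Q/V)))^m := pow_le_pow_left₀ hbase hstep m
    _ = V^m * Real.exp (-(2*Q/V)) ^ m := mul_pow _ _ _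
  have hVlog : V * Real.log V ≤ m * Q := by
    rwa [div_le_iff₀ (by linarith)] at hm
  have hexp : Real.exp (-(2*Q/V)) ^ m ≤ 1 / V^2 := by
    rw [← Real.exp_nat_mul]
    have harg : (m:ℝ) * (-(2*Q/V)) ≤ -(2 * Real.log V) := by
      have h5 : 2 * Real.log V ≤ 2*((m:ℝ)*Q)/V := by
        rw [le_div_iff₀ hV0]; nlinarith
      have h6 : (m:ℝ) * (-(2*Q/V)) = -(2*((m:ℝ)*Q)/V) := by ring
      rw [h6]; linarith
    calc Real.exp ((m:ℝ) * (-(2*Q/V))) ≤ Real.exp (-(2*Real.log V)) :=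
          Real.exp_le_exp.mpr harg
    _ = 1 / V^2 := by
        rw [Real.exp_neg, two_mul, Real.exp_add, Real.exp_log hV0, one_div, sq]
  have hm0 : 0 < V^m := pow_pos hV0 m
  have h3 : ((V:ℝ)*V - V) * ((V - 2*Q)^m) ≤ (V*V - V) * (V^m * (1/V^2)) := by
    apply mul_le_mul_of_nonneg_left _ (by nlinarith)
    exact hpow.trans (mul_le_mul_of_nonneg_left hexp (pow_nonneg hV0.le m))
  have h4 : (V*V - V) * (V^m * (1/V^2)) < V^m := by
    have he : (V*V - V) * (V^m * (1/V^2)) = V^m * (1 - 1/V) := by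
      field_simp
    rw [he]
    have : 0 < 1/V := by positivity
    nlinarith
  linarith

lemma keyIneq (v q m : ℕ) (hq : 1 ≤ q) (hv : 2*q + 1 ≤ v)
    (hm : (v:ℝ) * Real.log v / q ≤ m) :
    (v*v - v) * (v - 2*q)^m < v^m := by
  have h2q : 2*q ≤ v := by omega
  have hvv : v ≤ v*v := Nat.le_mul_of_pos_left v (by omega)
  rw [← Nat.cast_lt (α := ℝ)]
  push_cast [Nat.cast_sub h2q, Nat.cast_sub hvv]
  exact keyIneqR v q m hq hv hm

lemma exists_sep {α β : Type*} [Fintype α] [Fintype β] [DecidableEq α] [DecidableEq β]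
    (R : α → β → Prop) [∀ a b, Decidable (R a b)] (v q m : ℕ)
    (hβ : Fintype.card β = v) (hα : Fintype.card α ≤ v)
    (hq : 1 ≤ q) (hv : 2*q + 1 ≤ v)
    (hsep : ∀ a a' : α, a ≠ a' →
      ((univ : Finset β).filter (fun b => R a b ↔ R a' b)).card ≤ v - 2*q)
    (hm : (v:ℝ) * Real.log v / q ≤ m) :
    ∃ T : Finset β, T.card ≤ m ∧ ∀ a a' : α, a ≠ a' → ∃ b ∈ T, ¬(R a b ↔ R a' b) := by
  have key : ∃ f : Fin m → β, ∀ p ∈ (univ : Finset α).offDiag,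
      ∃ i, ¬(R p.1 (f i) ↔ R p.2 (f i)) := by
    by_contra hcon
    push_neg at hcon
    have hsub : (univ : Finset (Fin m → β)) ⊆ (univ : Finset α).offDiag.biUnion
        (fun p => Fintype.piFinset (fun _ : Fin m =>
          (univ : Finset β).filter (fun b => R p.1 b ↔ R p.2 b))) := by
      intro f _
      obtain ⟨p, hp, hall⟩ := hcon f
      exact mem_biUnion.mpr ⟨p, hp, Fintype.mem_piFinset.mpr
        (fun i => mem_filter.mpr ⟨mem_univ _, hall i⟩)⟩
    have hcard := card_le_card hsub
    rw [card_univ, Fintype.card_fun, Fintype.card_fin, hβ] at hcard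
    have hle : ((univ : Finset α).offDiag.biUnion
        (fun p => Fintype.piFinset (fun _ : Fin m =>
          (univ : Finset β).filter (fun b => R p.1 b ↔ R p.2 b)))).card
        ≤ (v*v - v) * (v - 2*q)^m := by
      refine (card_biUnion_le).trans ?_
      have hpt : ∀ p ∈ (univ : Finset α).offDiag,
          (Fintype.piFinset (fun _ : Fin m =>
            (univ : Finset β).filter (fun b => R p.1 b ↔ R p.2 b))).card ≤ (v - 2*q)^m := by
        intro p hp
        rw [Fintype.card_piFinset]
        simp only [mem_offDiag] at hp
        calc ∏ _i : Fin m, ((univ : Finset β).filter (fun b => R p.1 b ↔ R p.2 b)).card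
            ≤ ∏ _i : Fin m, (v - 2*q) :=
              Finset.prod_le_prod (fun _ _ => Nat.zero_le _) (fun _ _ => hsep p.1 p.2 hp.2.2)
          _ = (v - 2*q)^m := by simp [Finset.prod_const]
      calc ∑ p ∈ (univ : Finset α).offDiag, (Fintype.piFinset (fun _ : Fin m =>
            (univ : Finset β).filter (fun b => R p.1 b ↔ R p.2 b))).card
          ≤ ∑ _p ∈ (univ : Finset α).offDiag, (v - 2*q)^m := Finset.sum_le_sum hpt
        _ = (univ : Finset α).offDiag.card * (v - 2*q)^m := by
            rw [Finset.sum_const, smul_eq_mul]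
        _ ≤ (v*v - v) * (v - 2*q)^m := by
            apply Nat.mul_le_mul_right
            rw [Finset.offDiag_card, card_univ]
            have h1 : Fintype.card α * Fintype.card α - Fintype.card α
                = Fintype.card α * (Fintype.card α - 1) := by
              rw [Nat.mul_sub, mul_one]
            have h2 : v*v - v = v * (v-1) := by rw [Nat.mul_sub, mul_one]
            rw [h1, h2]
            exact Nat.mul_le_mul hα (by omega)
    exact absurd (hcard.trans hle) (not_le.mpr (keyIneq v q m hq hv hm))
  obtain ⟨f, hf⟩ := key
  refine ⟨univ.image f, card_image_le.trans (by simp), ?_⟩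
  intro a a' hne
  obtain ⟨i, hi⟩ := hf (a, a') (mem_offDiag.mpr ⟨mem_univ _, mem_univ _, hne⟩)
  exact ⟨f i, mem_image_of_mem f (mem_univ i), hi⟩

section IG
variable {X : Type*} [DecidableEq X] {B : Finset (Finset X)}

lemma ig_adj_inl_inr {x : X} {C : {C // C ∈ B}} :
    (incidenceGraph B).Adj (Sum.inl x) (Sum.inr C) ↔ x ∈ C.1 := Iff.rfl

lemma ig_adj_inr_inl {x : X} {C : {C // C ∈ B}} :
    (incidenceGraph B).Adj (Sum.inr C) (Sum.inl x) ↔ x ∈ C.1 := Iff.rfl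

lemma ig_adj_inl_inl {x y : X} :
    ¬ (incidenceGraph B).Adj (Sum.inl x) (Sum.inl y) := fun h => h

lemma ig_adj_inr_inr {C D : {C // C ∈ B}} :
    ¬ (incidenceGraph B).Adj (Sum.inr C) (Sum.inr D) := fun h => h

lemma igwalk_even {u w : X ⊕ {C // C ∈ B}} (p : (incidenceGraph B).Walk u w) :
    Even p.length ↔ (u.isLeft = w.isLeft) := by
  induction p with
  | nil => simp
  | @cons a b c h p ih =>
      rw [SimpleGraph.Walk.length_cons, Nat.even_add_one, ih]
      rcases a with x | C
      · rcases b with y | D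
        · exact absurd h ig_adj_inl_inl
        · cases c <;> simp
      · rcases b with y | D
        · cases c <;> simp
        · exact absurd h ig_adj_inr_inr

lemma ig_reach (hcommon : ∀ x y : X, ∃ C ∈ B, x ∈ C ∧ y ∈ C)
    (hne : ∀ C ∈ B, C.Nonempty) :
    ∀ u w : X ⊕ {C // C ∈ B}, (incidenceGraph B).Reachable u w := by
  have hpp : ∀ x y : X, (incidenceGraph B).Reachable (Sum.inl x) (Sum.inl y) := by
    intro x y
    obtain ⟨C, hC, hx, hy⟩ := hcommon x y
    exact ((ig_adj_inl_inr (C := ⟨C, hC⟩)).mpr hx).reachable.trans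
      ((ig_adj_inr_inl (C := ⟨C, hC⟩)).mpr hy).reachable
  have hpb : ∀ (x : X) (C : {C // C ∈ B}),
      (incidenceGraph B).Reachable (Sum.inl x) (Sum.inr C) := by
    intro x C
    obtain ⟨y, hy⟩ := hne C.1 C.2
    exact (hpp x y).trans (ig_adj_inl_inr.mpr hy).reachable
  rintro (x | C) (y | D)
  · exact hpp x y
  · exact hpb x D
  · exact (hpb y C).symm
  · obtain ⟨y, hy⟩ := hne C.1 C.2
    exact ((hpb y C).symm).trans (hpb y D)

end IG

lemma card_filter_coe {α : Type*} [DecidableEq α] (s : Finset α) (p : α → Prop)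
    [DecidablePred p] :
    ((univ : Finset {a // a ∈ s}).filter (fun a => p a.1)).card = (s.filter p).card := by
  rw [univ_eq_attach, filter_attach, card_map, card_attach]

lemma points_sep_count {X : Type*} [DecidableEq X] {B : Finset (Finset X)}
    {v k lam q : ℕ} (hB : B.card = v)
    (hpair : ∀ x y : X, x ≠ y → (B.filter (fun C => x ∈ C ∧ y ∈ C)).card = lam)
    (hdeg : ∀ x : X, (B.filter (fun C => x ∈ C)).card = k)
    (hk : k = lam + q) {x y : X} (hxy : x ≠ y) :
    (B.filter (fun C => x ∈ C ↔ y ∈ C)).card + 2*q = v := by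
  have h0 := card_filter_add_card_filter_not
    (s := B) (p := fun C => x ∈ C ↔ y ∈ C)
  have e1 : (B.filter (fun C => x ∈ C ∧ y ∉ C)).card + lam = k := by
    have h := card_filter_add_card_filter_not
      (s := B.filter (fun C => x ∈ C)) (p := fun C => y ∈ C)
    rw [filter_filter, filter_filter, hdeg x, hpair x y hxy] at h
    omega
  have e2 : (B.filter (fun C => y ∈ C ∧ x ∉ C)).card + lam = k := by
    have h := card_filter_add_card_filter_not
      (s := B.filter (fun C => y ∈ C)) (p := fun C => x ∈ C)
    rw [filter_filter, filter_filter, hdeg y] at h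
    have hyx : (B.filter (fun C => y ∈ C ∧ x ∈ C)).card = lam := hpair y x hxy.symm
    rw [hyx] at h
    omega
  have e3 : (B.filter (fun C => ¬(x ∈ C ↔ y ∈ C))).card
      = (B.filter (fun C => x ∈ C ∧ y ∉ C)).card
        + (B.filter (fun C => y ∈ C ∧ x ∉ C)).card := by
    have h := card_filter_add_card_filter_not
      (s := B.filter (fun C => ¬(x ∈ C ↔ y ∈ C))) (p := fun C => x ∈ C)
    rw [filter_filter, filter_filter] at h
    have hA : B.filter (fun C => ¬(x ∈ C ↔ y ∈ C) ∧ x ∈ C)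
        = B.filter (fun C => x ∈ C ∧ y ∉ C) := filter_congr (fun C _ => by tauto)
    have hBf : B.filter (fun C => ¬(x ∈ C ↔ y ∈ C) ∧ ¬(x ∈ C))
        = B.filter (fun C => y ∈ C ∧ x ∉ C) := filter_congr (fun C _ => by tauto)
    rw [hA, hBf] at h
    omega
  rw [hB] at h0
  omega

lemma blocks_sep_count {X : Type*} [Fintype X] [DecidableEq X]
    {v k lam q : ℕ} {C D : Finset X} (hX : Fintype.card X = v)
    (hblkC : C.card = k) (hblkD : D.card = k)
    (hint : (C ∩ D).card = lam)
    (hk : k = lam + q) :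
    ((univ : Finset X).filter (fun p => p ∈ C ↔ p ∈ D)).card + 2*q = v := by
  have h0 := card_filter_add_card_filter_not
    (s := (univ : Finset X)) (p := fun p => p ∈ C ↔ p ∈ D)
  have e1 : ((univ : Finset X).filter (fun p => p ∈ C ∧ p ∉ D)).card + lam = k := by
    have hs : (univ : Finset X).filter (fun p => p ∈ C ∧ p ∉ D) = C \ D := by
      ext a; simp [Finset.mem_sdiff]
    rw [hs, ← hint, ← hblkC]
    exact Finset.card_sdiff_add_card_inter C D
  have e2 : ((univ : Finset X).filter (fun p => p ∈ D ∧ p ∉ C)).card + lam = k := by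
    have hs : (univ : Finset X).filter (fun p => p ∈ D ∧ p ∉ C) = D \ C := by
      ext a; simp [Finset.mem_sdiff]
    rw [hs, ← hint, Finset.inter_comm, ← hblkD]
    exact Finset.card_sdiff_add_card_inter D C
  have e3 : ((univ : Finset X).filter (fun p => ¬(p ∈ C ↔ p ∈ D))).card
      = ((univ : Finset X).filter (fun p => p ∈ C ∧ p ∉ D)).card
        + ((univ : Finset X).filter (fun p => p ∈ D ∧ p ∉ C)).card := by
    have h := card_filter_add_card_filter_not
      (s := (univ : Finset X).filter (fun p => ¬(p ∈ C ↔ p ∈ D))) (p := fun p => p ∈ C)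
    rw [filter_filter, filter_filter] at h
    have hA : (univ : Finset X).filter (fun p => ¬(p ∈ C ↔ p ∈ D) ∧ p ∈ C)
        = (univ : Finset X).filter (fun p => p ∈ C ∧ p ∉ D) :=
      filter_congr (fun p _ => by tauto)
    have hBf : (univ : Finset X).filter (fun p => ¬(p ∈ C ↔ p ∈ D) ∧ ¬(p ∈ C))
        = (univ : Finset X).filter (fun p => p ∈ D ∧ p ∉ C) :=
      filter_congr (fun p _ => by tauto)
    rw [hA, hBf] at h
    omega
  rw [card_univ, hX] at h0
  omega

set_option maxHeartbeats 1000000 in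
theorem stmt_18 :
    ∃ Cst : ℝ, 0 < Cst ∧
      ∀ (X : Type) [Fintype X] [DecidableEq X]
        (v k lam q : ℕ) (B : Finset (Finset X)),
        Fintype.card X = v → B.card = v →
        (∀ C ∈ B, C.card = k) →
        (∀ x y : X, x ≠ y → (B.filter (fun C => x ∈ C ∧ y ∈ C)).card = lam) →
        (∀ C ∈ B, ∀ D ∈ B, C ≠ D → (C ∩ D).card = lam) →
        (∀ x : X, (B.filter (fun C => x ∈ C)).card = k) →
        k = lam + q → 2 ≤ q →
        metricDim (incidenceGraph B) ≤
            2 * ⌈((v : ℝ) * Real.log v) / ((k : ℝ) - lam)⌉₊ ∧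
          (metricDim (incidenceGraph B) : ℝ) ≤
            Cst * Real.sqrt (2 * v) * Real.log (2 * v) := by
  refine ⟨3, by norm_num, ?_⟩
  intro X _ _ v k lam q B hX hB hblk hpair hint hdeg hk hq2
  by_cases hv0 : v = 0
  · subst hv0
    have hXe : IsEmpty X := Fintype.card_eq_zero_iff.mp hX
    have hres : IsResolvingSet (incidenceGraph B) ∅ := by
      intro u w _
      rcases u with x | C
      · exact hXe.elim x
      · exact absurd C.2 (by simp [Finset.card_eq_zero.mp hB])
    have h0 : metricDim (incidenceGraph B) = 0 :=
      Nat.le_zero.mp (by simpa using metricDim_le_card _ _ hres)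
    refine ⟨by simp [h0], ?_⟩
    rw [h0]
    norm_num
  · have hv1 : 1 ≤ v := Nat.pos_of_ne_zero hv0
    have hXpos : 0 < Fintype.card X := by rw [hX]; omega
    obtain ⟨x₀⟩ := Fintype.card_pos_iff.mp hXpos
    have hlam1 : 1 ≤ lam := by
      have hc : 1 < (B.filter (fun C => x₀ ∈ C)).card := by rw [hdeg x₀]; omega
      obtain ⟨C, hC, D, hD, hCD⟩ := Finset.one_lt_card.mp hc
      have hC' := Finset.mem_filter.mp hC
      have hD' := Finset.mem_filter.mp hD
      have hl := hint C hC'.1 D hD'.1 hCD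
      have hx : x₀ ∈ C ∩ D := Finset.mem_inter.mpr ⟨hC'.2, hD'.2⟩
      have := Finset.card_pos.mpr ⟨x₀, hx⟩
      omega
    have hk3 : 3 ≤ k := by omega
    have hBne : B.Nonempty := Finset.card_pos.mp (by omega)
    obtain ⟨C₀, hC₀⟩ := hBne
    have hkv : k ≤ v := by
      rw [← hblk C₀ hC₀, ← hX]
      exact Finset.card_le_univ C₀
    have hv3 : 3 ≤ v := le_trans hk3 hkv
    obtain ⟨C₁, hC₁, D₁, hD₁, hCD₁⟩ := Finset.one_lt_card.mp (show 1 < B.card by omega)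
    have h2k : k + k ≤ v + lam := by
      have hu := Finset.card_union_add_card_inter C₁ D₁
      rw [hint C₁ hC₁ D₁ hD₁ hCD₁, hblk C₁ hC₁, hblk D₁ hD₁] at hu
      have hUv : (C₁ ∪ D₁).card ≤ v := by rw [← hX]; exact Finset.card_le_univ _
      omega
    have h2q1 : 2*q + 1 ≤ v := by omega
    -- double counting : lam * (v-1) = k * (k-1)
    have hdc : lam * (v - 1) = k * (k - 1) := by
      have L : ∑ y ∈ univ.erase x₀, (B.filter (fun C => x₀ ∈ C ∧ y ∈ C)).card
          = (v - 1) * lam := by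
        rw [Finset.sum_congr rfl
          (fun y hy => hpair x₀ y (Ne.symm (Finset.mem_erase.mp hy).1))]
        rw [Finset.sum_const, smul_eq_mul, Finset.card_erase_of_mem (mem_univ _),
          Finset.card_univ, hX]
      have step1 : ∀ C ∈ B,
          (∑ y ∈ univ.erase x₀, if x₀ ∈ C ∧ y ∈ C then 1 else 0)
            = if x₀ ∈ C then k - 1 else 0 := by
        intro C hC
        by_cases hx : x₀ ∈ C
        · simp only [hx, true_and, if_true]
          have hfe : (univ.erase x₀).filter (fun y => y ∈ C) = C.erase x₀ := by
            ext y; simp [Finset.mem_erase]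
          rw [← Finset.card_filter, hfe, Finset.card_erase_of_mem hx, hblk C hC]
        · simp [hx]
      have Rr : ∑ y ∈ univ.erase x₀, (B.filter (fun C => x₀ ∈ C ∧ y ∈ C)).card
          = k * (k - 1) := by
        calc ∑ y ∈ univ.erase x₀, (B.filter (fun C => x₀ ∈ C ∧ y ∈ C)).card
            = ∑ y ∈ univ.erase x₀, ∑ C ∈ B, if x₀ ∈ C ∧ y ∈ C then 1 else 0 := by
              simp_rw [Finset.card_filter]
          _ = ∑ C ∈ B, ∑ y ∈ univ.erase x₀, if x₀ ∈ C ∧ y ∈ C then 1 else 0 :=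
              Finset.sum_comm
          _ = ∑ C ∈ B, if x₀ ∈ C then k - 1 else 0 := Finset.sum_congr rfl step1
          _ = ∑ C ∈ B.filter (fun C => x₀ ∈ C), (k - 1) :=
              (Finset.sum_filter _ _).symm
          _ = (B.filter (fun C => x₀ ∈ C)).card * (k - 1) := by
              rw [Finset.sum_const, smul_eq_mul]
          _ = k * (k - 1) := by rw [hdeg x₀]
      rw [L] at Rr
      exact (mul_comm lam (v - 1)).trans Rr
    -- v ≤ 2 q²
    have hv2q : v ≤ 2*q*q := by
      have hdcZ : (lam:ℤ) * ((v:ℤ) - 1) = (k:ℤ) * ((k:ℤ) - 1) := by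
        have h := hdc
        zify [hv1, show 1 ≤ k by omega] at h
        exact h
      have hkZ : (k:ℤ) = (lam:ℤ) + (q:ℤ) := by exact_mod_cast hk
      have hDge : (0:ℤ) ≤ (v:ℤ) - 2*(k:ℤ) + (lam:ℤ) := by
        have : (k:ℤ) + (k:ℤ) ≤ (v:ℤ) + (lam:ℤ) := by exact_mod_cast h2k
        linarith
      have hprod : (lam:ℤ) * ((v:ℤ) - 2*(k:ℤ) + (lam:ℤ)) = (q:ℤ)*(q:ℤ) - (q:ℤ) := by
        linear_combination hdcZ + ((k:ℤ) - (lam:ℤ) + (q:ℤ) - 1) * hkZ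
      have hq2Z : (2:ℤ) ≤ (q:ℤ) := by exact_mod_cast hq2
      have hlamZ : (1:ℤ) ≤ (lam:ℤ) := by exact_mod_cast hlam1
      have hD1 : (1:ℤ) ≤ (v:ℤ) - 2*(k:ℤ) + (lam:ℤ) := by
        rcases lt_or_eq_of_le hDge with h | h
        · omega
        · exfalso; nlinarith
      have hvZ : (v:ℤ) ≤ 2*(q:ℤ)*(q:ℤ) := by
        nlinarith [mul_nonneg (sub_nonneg.mpr hlamZ) (sub_nonneg.mpr hD1)]
      exact_mod_cast hvZ
    set m := ⌈((v : ℝ) * Real.log v) / ((k : ℝ) - lam)⌉₊ with hm_def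
    have hkq : ((k:ℝ) - (lam:ℝ)) = (q:ℝ) := by
      have : (k:ℝ) = (lam:ℝ) + (q:ℝ) := by exact_mod_cast hk
      linarith
    have hmge : (v:ℝ) * Real.log v / q ≤ m := by
      rw [← hkq]; exact Nat.le_ceil _
    obtain ⟨T₁, hT₁card, hT₁sep⟩ := exists_sep
      (fun (x : X) (C : {C // C ∈ B}) => x ∈ C.1) v q m
      (by rw [Fintype.card_coe, hB]) (le_of_eq hX) (by omega) h2q1
      (fun x y hxy => by
        show ((univ : Finset {C // C ∈ B}).filter
          (fun C => x ∈ C.1 ↔ y ∈ C.1)).card ≤ v - 2*q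
        rw [card_filter_coe B (fun C => x ∈ C ↔ y ∈ C)]
        have := points_sep_count hB hpair hdeg hk hxy
        omega)
      hmge
    obtain ⟨T₂, hT₂card, hT₂sep⟩ := exists_sep
      (fun (C : {C // C ∈ B}) (p : X) => p ∈ C.1) v q m
      hX (le_of_eq (by rw [Fintype.card_coe, hB])) (by omega) h2q1
      (fun C D hCD => by
        show ((univ : Finset X).filter
          (fun p => p ∈ C.1 ↔ p ∈ D.1)).card ≤ v - 2*q
        have hne : C.1 ≠ D.1 := fun h => hCD (Subtype.ext h)
        have := blocks_sep_count hX (hblk C.1 C.2) (hblk D.1 D.2)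
          (hint C.1 C.2 D.1 D.2 hne) hk
        omega)
      hmge
    set S : Finset (X ⊕ {C // C ∈ B}) := T₂.image Sum.inl ∪ T₁.image Sum.inr with hS_def
    have hcommon : ∀ x y : X, ∃ C ∈ B, x ∈ C ∧ y ∈ C := by
      intro x y
      by_cases hxy : x = y
      · subst hxy
        have hp : 0 < (B.filter (fun C => x ∈ C)).card := by rw [hdeg]; omega
        obtain ⟨C, hC⟩ := Finset.card_pos.mp hp
        have h := Finset.mem_filter.mp hC
        exact ⟨C, h.1, h.2, h.2⟩
      · have hp : 0 < (B.filter (fun C => x ∈ C ∧ y ∈ C)).card := by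
          rw [hpair x y hxy]; omega
        obtain ⟨C, hC⟩ := Finset.card_pos.mp hp
        have h := Finset.mem_filter.mp hC
        exact ⟨C, h.1, h.2⟩
    have hblkne : ∀ C ∈ B, C.Nonempty := fun C hC =>
      Finset.card_pos.mp (by rw [hblk C hC]; omega)
    have hreach := ig_reach hcommon hblkne
    obtain ⟨xa, xb, hab⟩ := Fintype.exists_pair_of_one_lt_card (by rw [hX]; omega)
    obtain ⟨Cw, hCwT, _⟩ := hT₁sep xa xb hab
    have hSw : (Sum.inr Cw : X ⊕ {C // C ∈ B}) ∈ S :=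
      Finset.mem_union_right _ (Finset.mem_image_of_mem _ hCwT)
    have hpar : ∀ (u w : X ⊕ {C // C ∈ B}),
        Even ((incidenceGraph B).dist u w) ↔ u.isLeft = w.isLeft := by
      intro u w
      obtain ⟨p, hp⟩ := (hreach u w).exists_walk_length_eq_dist
      rw [← hp]
      exact igwalk_even p
    have hres : IsResolvingSet (incidenceGraph B) S := by
      intro u w h
      have hmix : u.isLeft = w.isLeft := by
        have h1 := h _ hSw
        have e1 := hpar u (Sum.inr Cw)
        have e2 := hpar w (Sum.inr Cw)
        rw [h1] at e1
        have hiff2 : (w.isLeft = false) ↔ (u.isLeft = false) := e2.symm.trans e1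
        cases hw' : w.isLeft
        · exact hiff2.mp hw'
        · cases hu' : u.isLeft
          · exact absurd ((hiff2.mpr hu').symm.trans hw') (by decide)
          · rfl
      rcases u with x | C <;> rcases w with y | D
      · by_contra hne
        have hxy : x ≠ y := fun h' => hne (congrArg Sum.inl h')
        obtain ⟨Cs, hCsT, hCs⟩ := hT₁sep x y hxy
        have hmem : (Sum.inr Cs : X ⊕ {C // C ∈ B}) ∈ S :=
          Finset.mem_union_right _ (Finset.mem_image_of_mem _ hCsT)
        have hd := h _ hmem
        by_cases hxC : x ∈ Cs.1
        · have hyC : y ∉ Cs.1 := fun h' => hCs (iff_of_true hxC h')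
          have d1 : (incidenceGraph B).dist (Sum.inl x) (Sum.inr Cs) = 1 :=
            SimpleGraph.dist_eq_one_iff_adj.mpr (ig_adj_inl_inr.mpr hxC)
          exact hyC (ig_adj_inl_inr.mp
            (SimpleGraph.dist_eq_one_iff_adj.mp (by rw [← hd, d1])))
        · have hyC : y ∈ Cs.1 := by
            by_contra h'
            exact hCs (iff_of_false hxC h')
          have d1 : (incidenceGraph B).dist (Sum.inl y) (Sum.inr Cs) = 1 :=
            SimpleGraph.dist_eq_one_iff_adj.mpr (ig_adj_inl_inr.mpr hyC)
          exact hxC (ig_adj_inl_inr.mp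
            (SimpleGraph.dist_eq_one_iff_adj.mp (by rw [hd, d1])))
      · exact absurd hmix (by simp)
      · exact absurd hmix (by simp)
      · by_contra hne
        have hCD : C ≠ D := fun h' => hne (congrArg Sum.inr h')
        obtain ⟨ps, hpsT, hps⟩ := hT₂sep C D hCD
        have hmem : (Sum.inl ps : X ⊕ {C // C ∈ B}) ∈ S :=
          Finset.mem_union_left _ (Finset.mem_image_of_mem _ hpsT)
        have hd := h _ hmem
        by_cases hpC : ps ∈ C.1
        · have hpD : ps ∉ D.1 := fun h' => hps (iff_of_true hpC h')
          have d1 : (incidenceGraph B).dist (Sum.inr C) (Sum.inl ps) = 1 :=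
            SimpleGraph.dist_eq_one_iff_adj.mpr (ig_adj_inr_inl.mpr hpC)
          exact hpD (ig_adj_inr_inl.mp
            (SimpleGraph.dist_eq_one_iff_adj.mp (by rw [← hd, d1])))
        · have hpD : ps ∈ D.1 := by
            by_contra h'
            exact hps (iff_of_false hpC h')
          have d1 : (incidenceGraph B).dist (Sum.inr D) (Sum.inl ps) = 1 :=
            SimpleGraph.dist_eq_one_iff_adj.mpr (ig_adj_inr_inl.mpr hpD)
          exact hpC (ig_adj_inr_inl.mp
            (SimpleGraph.dist_eq_one_iff_adj.mp (by rw [hd, d1])))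
    have hcardS : S.card ≤ 2*m := by
      refine (Finset.card_union_le _ _).trans ?_
      have h1 := Finset.card_image_le
        (f := (Sum.inl : X → X ⊕ {C // C ∈ B})) (s := T₂)
      have h2 := Finset.card_image_le
        (f := (Sum.inr : {C // C ∈ B} → X ⊕ {C // C ∈ B})) (s := T₁)
      omega
    have hmain : metricDim (incidenceGraph B) ≤ 2*m :=
      (metricDim_le_card _ _ hres).trans hcardS
    refine ⟨hmain, ?_⟩
    have hv1R : (1:ℝ) ≤ (v:ℝ) := by exact_mod_cast hv1
    have hlogv : 0 ≤ Real.log v := Real.log_nonneg hv1R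
    have hq0 : (0:ℝ) < (q:ℝ) := by
      have : (2:ℝ) ≤ (q:ℝ) := by exact_mod_cast hq2
      linarith
    have hmle : (m:ℝ) ≤ (v:ℝ) * Real.log v / q + 1 := by
      have hx0 : 0 ≤ ((v:ℝ) * Real.log v) / ((k:ℝ) - lam) := by
        rw [hkq]; positivity
      have heq : ((v:ℝ) * Real.log v) / ((k:ℝ) - lam) = (v:ℝ) * Real.log v / q := by
        rw [hkq]
      calc (m:ℝ) ≤ ((v:ℝ) * Real.log v) / ((k:ℝ) - lam) + 1 :=
            (Nat.ceil_lt_add_one hx0).le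
      _ = (v:ℝ) * Real.log v / q + 1 := by rw [heq]
    have hvq : (v:ℝ) / q ≤ Real.sqrt (2*v) := by
      have hv2qR : (v:ℝ) ≤ 2*(q:ℝ)*(q:ℝ) := by exact_mod_cast hv2q
      have h1 : ((v:ℝ))^2 ≤ (2*(v:ℝ)) * (q:ℝ)^2 := by nlinarith
      rw [Real.le_sqrt (by positivity) (by positivity), div_pow,
        div_le_iff₀ (by positivity)]
      nlinarith
    have hloglog : Real.log v ≤ Real.log (2*v) :=
      Real.log_le_log (by positivity) (by linarith)
    have hstep1 : (v:ℝ) * Real.log v / q ≤ Real.sqrt (2*v) * Real.log (2*v) := by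
      have he : (v:ℝ) * Real.log v / q = ((v:ℝ)/q) * Real.log v := by ring
      rw [he]
      exact mul_le_mul hvq hloglog hlogv (Real.sqrt_nonneg _)
    have hv3R : (3:ℝ) ≤ (v:ℝ) := by exact_mod_cast hv3
    have hbig : (2:ℝ) ≤ Real.sqrt (2*v) * Real.log (2*v) := by
      have hs : (2:ℝ) ≤ Real.sqrt (2*v) := by
        rw [Real.le_sqrt (by norm_num) (by positivity)]
        norm_num
        linarith
      have hl : (1:ℝ) ≤ Real.log (2*v) := by
        rw [Real.le_log_iff_exp_le (by positivity)]
        have := Real.exp_one_lt_d9.le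
        linarith
      nlinarith [Real.sqrt_nonneg (2*(v:ℝ))]
    calc (metricDim (incidenceGraph B) : ℝ) ≤ 2*(m:ℝ) := by exact_mod_cast hmain
    _ ≤ 2*((v:ℝ)*Real.log v/q + 1) := by linarith
    _ ≤ 2*(Real.sqrt (2*v)*Real.log (2*v)) + 2 := by linarith
    _ ≤ 3 * Real.sqrt (2*v) * Real.log (2*v) := by nlinarith
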